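/- arXiv:1204.1136 — 2 statements merged into one kernel-verified Lean document; each statement's English description precedes it below -/
import Mathlib

section
/- Suppose G is connected. Let A ⊊ V be a proper subset of the vertices and let i ∈ A. Then the expected time for the Metropolis–Hastings walk RW(G_1) started at i to reach a vertex outside A satisfies E_i T_{V∖A} < (|A|+1)·(6|A| + 2Δ). -/
open Finset Matrix
set_option linter.unusedSectionVars false

/-- The Metropolis–Hastings transition matrix on a graph, with unit potential:
`P v u = min (1/deg v) (1/deg u)` for adjacent `u ≠ v`, `0` for non-adjacent `u ≠ v`,
and `P v v = 1 - ∑_{u ∈ Γ(v)} min (1/deg v) (1/deg u)`. -/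
noncomputable def mhMatrix {V : Type*} [Fintype V] [DecidableEq V] (G : SimpleGraph V)
    [DecidableRel G.Adj] : Matrix V V ℝ :=
  Matrix.of fun v u =>
    if u = v then
      1 - ∑ w ∈ G.neighborFinset v, min ((G.degree v : ℝ))⁻¹ ((G.degree w : ℝ))⁻¹
    else if G.Adj v u then min ((G.degree v : ℝ))⁻¹ ((G.degree u : ℝ))⁻¹
    else 0

/-- Probability, for the Markov chain with transition matrix `P` and initial distribution `μ`,
that the trajectory `(X_0, …, X_L)` lies in the event `E`. -/
noncomputable def prTraj {V : Type*} [Fintype V] (P : Matrix V V ℝ) (μ : V → ℝ) (L : ℕ)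
    (E : Set (Fin (L + 1) → V)) : ℝ :=
  ∑ x : Fin (L + 1) → V,
    E.indicator (fun y => μ (y 0) * ∏ τ : Fin L, P (y τ.castSucc) (y τ.succ)) x

/-- Point mass at `i`, as an initial distribution. -/
def dirac {V : Type*} [DecidableEq V] (i : V) : V → ℝ := fun v => if v = i then 1 else 0

section MH

variable {V : Type*} [Fintype V] [DecidableEq V] (G : SimpleGraph V) [DecidableRel G.Adj]

/-- conductance of an edge -/
noncomputable def mhc (v u : V) : ℝ := min ((G.degree v : ℝ))⁻¹ ((G.degree u : ℝ))⁻¹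

/-- the transition matrix with both indices restricted to `A`. -/
noncomputable def mhQ (A : Finset V) : Matrix V V ℝ :=
  Matrix.of fun v u => if v ∈ A ∧ u ∈ A then mhMatrix G v u else 0

/-- indicator vector of `A` -/
def indA (A : Finset V) : V → ℝ := fun v => if v ∈ A then 1 else 0

variable {G}

lemma mhc_symm (v u : V) : mhc G v u = mhc G u v := min_comm _ _

lemma mhc_nonneg (v u : V) : 0 ≤ mhc G v u := le_min (by positivity) (by positivity)

lemma mhc_pos (h : G.Adj v u) : 0 < mhc G v u := by
  have hv : 0 < G.degree v := G.degree_pos_iff_exists_adj v |>.mpr ⟨u, h⟩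
  have hu : 0 < G.degree u := G.degree_pos_iff_exists_adj u |>.mpr ⟨v, h.symm⟩
  have hv' : (0:ℝ) < (G.degree v : ℝ) := by exact_mod_cast hv
  have hu' : (0:ℝ) < (G.degree u : ℝ) := by exact_mod_cast hu
  exact lt_min (by positivity) (by positivity)

lemma mhc_inv_eq (h : G.Adj v u) :
    (mhc G v u)⁻¹ = ((max (G.degree v) (G.degree u) : ℕ) : ℝ) := by
  have hv : 0 < G.degree v := G.degree_pos_iff_exists_adj v |>.mpr ⟨u, h⟩
  have hu : 0 < G.degree u := G.degree_pos_iff_exists_adj u |>.mpr ⟨v, h.symm⟩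
  have hv' : (0:ℝ) < (G.degree v : ℝ) := by exact_mod_cast hv
  have hu' : (0:ℝ) < (G.degree u : ℝ) := by exact_mod_cast hu
  simp only [mhc]
  rcases le_total (G.degree v) (G.degree u) with hle | hle
  · have hle' : (G.degree v : ℝ) ≤ (G.degree u : ℝ) := by exact_mod_cast hle
    rw [min_eq_right (inv_anti₀ hv' hle'), inv_inv, max_eq_right hle]
  · have hle' : (G.degree u : ℝ) ≤ (G.degree v : ℝ) := by exact_mod_cast hle
    rw [min_eq_left (inv_anti₀ hu' hle'), inv_inv, max_eq_left hle]

lemma mhMatrix_diag (v : V) :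
    mhMatrix G v v = 1 - ∑ w ∈ G.neighborFinset v, mhc G v w := by simp [mhMatrix, mhc]

lemma mhMatrix_adj (h : G.Adj v u) : mhMatrix G v u = mhc G v u := by simp [mhMatrix, mhc, h, h.ne']

lemma mhMatrix_nonadj (h1 : u ≠ v) (h2 : ¬ G.Adj v u) : mhMatrix G v u = 0 := by simp [mhMatrix, h1, h2]

lemma sum_mhc_le_one (v : V) : ∑ w ∈ G.neighborFinset v, mhc G v w ≤ 1 := by
  have h1 : ∑ w ∈ G.neighborFinset v, mhc G v w ≤
      ∑ _w ∈ G.neighborFinset v, ((G.degree v : ℝ))⁻¹ :=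
    Finset.sum_le_sum fun w _ => min_le_left _ _
  rw [Finset.sum_const, G.card_neighborFinset_eq_degree, nsmul_eq_mul] at h1
  rcases Nat.eq_zero_or_pos (G.degree v) with h | h
  · have hemp : G.neighborFinset v = ∅ :=
      Finset.card_eq_zero.mp (by rw [G.card_neighborFinset_eq_degree]; exact h)
    simp [hemp]
  · have : (0:ℝ) < (G.degree v : ℝ) := by exact_mod_cast h
    rw [mul_inv_cancel₀ (ne_of_gt this)] at h1
    exact h1

lemma mhMatrix_nonneg (v u : V) : 0 ≤ mhMatrix G v u := by
  by_cases h : u = v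
  · subst h
    rw [mhMatrix_diag]
    have := sum_mhc_le_one (G := G) u
    linarith
  · by_cases hadj : G.Adj v u
    · rw [mhMatrix_adj hadj]; exact mhc_nonneg _ _
    · rw [mhMatrix_nonadj h hadj]

lemma mhMatrix_symm (v u : V) : mhMatrix G v u = mhMatrix G u v := by
  by_cases h : u = v
  · subst h; rfl
  · by_cases hadj : G.Adj v u
    · rw [mhMatrix_adj hadj, mhMatrix_adj hadj.symm, mhc_symm]
    · rw [mhMatrix_nonadj h hadj,
        mhMatrix_nonadj (Ne.symm h) (fun hc => hadj hc.symm)]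

variable {A : Finset V}

lemma mhQ_nonneg (A : Finset V) (v u : V) : 0 ≤ mhQ G A v u := by
  simp only [mhQ, Matrix.of_apply]
  split
  · exact mhMatrix_nonneg v u
  · exact le_rfl

lemma mhQ_symm (A : Finset V) (v u : V) : mhQ G A v u = mhQ G A u v := by
  simp only [mhQ, Matrix.of_apply, mhMatrix_symm v u]
  exact if_congr and_comm rfl rfl

lemma mhQ_eq_zero_of_left (hv : v ∉ A) (u : V) : mhQ G A v u = 0 := by simp [mhQ, hv]

/-- row sums of `mhQ`. -/
lemma mhQ_row_sum (hv : v ∈ A) :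
    ∑ u, mhQ G A v u = 1 - ∑ u ∈ (G.neighborFinset v).filter (· ∉ A), mhc G v u := by
  classical
  have h1 : ∑ u, mhQ G A v u = ∑ u ∈ Finset.univ.filter (· ∈ A), mhMatrix G v u := by
    rw [Finset.sum_filter]
    refine Finset.sum_congr rfl fun u _ => ?_
    simp [mhQ, hv]
  have hvmem : v ∈ Finset.univ.filter (· ∈ A) := by simp [hv]
  have h2 : ∑ u ∈ Finset.univ.filter (· ∈ A), mhMatrix G v u =
      mhMatrix G v v + ∑ u ∈ (Finset.univ.filter (· ∈ A)).erase v, mhMatrix G v u :=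
    (Finset.add_sum_erase _ _ hvmem).symm
  have h3 : ∑ u ∈ (Finset.univ.filter (· ∈ A)).erase v, mhMatrix G v u =
      ∑ u ∈ (G.neighborFinset v).filter (· ∈ A), mhc G v u := by
    have e1 : ∑ u ∈ (Finset.univ.filter (· ∈ A)).erase v, mhMatrix G v u =
        ∑ u ∈ (Finset.univ.filter (· ∈ A)).erase v, (if G.Adj v u then mhc G v u else 0) := by
      refine Finset.sum_congr rfl fun u hu => ?_
      by_cases hadj : G.Adj v u
      · simp [hadj, mhMatrix_adj hadj]
      · simp [hadj, mhMatrix_nonadj (Finset.ne_of_mem_erase hu) hadj]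
    rw [e1, ← Finset.sum_filter]
    refine Finset.sum_congr ?_ fun _ _ => rfl
    ext u
    simp only [Finset.mem_filter, Finset.mem_erase, Finset.mem_univ, true_and,
      SimpleGraph.mem_neighborFinset]
    constructor
    · rintro ⟨⟨hne, hA'⟩, hadj⟩; exact ⟨hadj, hA'⟩
    · rintro ⟨hadj, hA'⟩; exact ⟨⟨hadj.ne', hA'⟩, hadj⟩
  have h4 : ∑ u ∈ G.neighborFinset v, mhc G v u =
      ∑ u ∈ (G.neighborFinset v).filter (· ∈ A), mhc G v u +
      ∑ u ∈ (G.neighborFinset v).filter (· ∉ A), mhc G v u :=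
    (Finset.sum_filter_add_sum_filter_not _ _ _).symm
  rw [h1, h2, h3, mhMatrix_diag, h4]
  ring

lemma mhQ_row_sum_le_one (hv : v ∈ A) : ∑ u, mhQ G A v u ≤ 1 := by
  rw [mhQ_row_sum hv]
  have h0 : (0:ℝ) ≤ ∑ u ∈ (G.neighborFinset v).filter (· ∉ A), mhc G v u :=
    Finset.sum_nonneg fun u _ => mhc_nonneg _ _
  linarith

/-- if the `A`-row sum is 1, all neighbours lie in `A`. -/
lemma neighbors_subset_of_row_sum_eq_one (hv : v ∈ A) (h : ∑ u, mhQ G A v u = 1) :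
    ∀ u, G.Adj v u → u ∈ A := by
  have hs := mhQ_row_sum (G := G) hv
  rw [h] at hs
  have hzero : ∑ u ∈ (G.neighborFinset v).filter (· ∉ A), mhc G v u = 0 := by linarith
  intro u hadj
  by_contra huA
  have hmem : u ∈ (G.neighborFinset v).filter (· ∉ A) :=
    Finset.mem_filter.mpr ⟨(SimpleGraph.mem_neighborFinset _ _ _).mpr hadj, huA⟩
  have h0 := (Finset.sum_eq_zero_iff_of_nonneg fun x _ => mhc_nonneg _ _).mp hzero u hmem
  exact absurd h0 (ne_of_gt (mhc_pos hadj))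

lemma mhQ_apply_adj (hv : v ∈ A) (hu : u ∈ A) (h : G.Adj v u) :
    mhQ G A v u = mhc G v u := by simp [mhQ, hv, hu, mhMatrix_adj h]

/-- a nonempty set closed under adjacency contains every vertex. -/
lemma closed_set_eq_univ (hG : G.Connected) {S : Set V}
    (hcl : ∀ v ∈ S, ∀ u, G.Adj v u → u ∈ S) {v0 : V} (hv0 : v0 ∈ S) : ∀ u, u ∈ S := by
  intro u
  have H : ∀ {a b : V} (_ : G.Walk a b), a ∈ S → b ∈ S := by
    intro a b p
    induction p with
    | nil => exact fun ha => ha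
    | cons h q ih => exact fun ha => ih (hcl _ ha _ h)
  obtain ⟨p⟩ := hG.preconnected v0 u
  exact H p hv0

end MH

section Principles

variable {V : Type*} [Fintype V] [DecidableEq V] {G : SimpleGraph V} [DecidableRel G.Adj]
variable {A : Finset V} {i : V}

/-- minimum principle: the Green column is nonnegative. -/
lemma phi_nonneg (hG : G.Connected) (hA : A ⊂ Finset.univ) (hi : i ∈ A) {φ : V → ℝ}
    (hφ : ∀ v, φ v - ∑ u, mhQ G A v u * φ u = dirac i v) : ∀ v, 0 ≤ φ v := by
  by_contra hneg
  push_neg at hneg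
  obtain ⟨w0, hw0⟩ := hneg
  obtain ⟨v0, -, hv0min⟩ :=
    Finset.exists_min_image Finset.univ φ ⟨w0, Finset.mem_univ w0⟩
  have hminle : ∀ u, φ v0 ≤ φ u := fun u => hv0min u (Finset.mem_univ u)
  have hm : φ v0 < 0 := lt_of_le_of_lt (hminle w0) hw0
  set S : Set V := {v | φ v = φ v0} with hS
  have hSA : ∀ v ∈ S, v ∈ A := by
    intro v hvS
    by_contra hvA
    have heq := hφ v
    have hz : ∑ u, mhQ G A v u * φ u = 0 :=
      Finset.sum_eq_zero fun u _ => by rw [mhQ_eq_zero_of_left hvA]; ring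
    have hd : (0:ℝ) ≤ dirac i v := by unfold dirac; split <;> norm_num
    have : φ v = φ v0 := hvS
    rw [hz, sub_zero] at heq
    linarith
  have hcl : ∀ v ∈ S, ∀ u, G.Adj v u → u ∈ S := by
    intro v hvS u hadj
    have hvA := hSA v hvS
    have heq := hφ v
    have hvv0 : φ v = φ v0 := hvS
    have hd : (0:ℝ) ≤ dirac i v := by unfold dirac; split <;> norm_num
    have hterm : ∀ u' ∈ Finset.univ, mhQ G A v u' * φ v0 ≤ mhQ G A v u' * φ u' :=
      fun u' _ => mul_le_mul_of_nonneg_left (hminle u') (mhQ_nonneg A v u')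
    have hsum1 : (∑ u', mhQ G A v u') * φ v0 ≤ ∑ u', mhQ G A v u' * φ u' := by
      rw [Finset.sum_mul]; exact Finset.sum_le_sum hterm
    have hrow := mhQ_row_sum_le_one (G := G) hvA
    have h2 : φ v0 ≤ (∑ u', mhQ G A v u') * φ v0 := by nlinarith
    have hsum2 : ∑ u', mhQ G A v u' * φ u' = φ v0 - dirac i v := by linarith
    have hkey : (∑ u', mhQ G A v u') * φ v0 = ∑ u', mhQ G A v u' * φ u' := by linarith
    have hrow1 : ∑ u', mhQ G A v u' = 1 := by
      have hk2 : (∑ u', mhQ G A v u') * φ v0 = φ v0 := by linarith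
      have := mul_right_cancel₀ (ne_of_lt hm) (by rw [hk2, one_mul] : (∑ u', mhQ G A v u') * φ v0 = 1 * φ v0)
      exact this
    have htw : ∀ u' ∈ Finset.univ, mhQ G A v u' * φ v0 = mhQ G A v u' * φ u' := by
      rw [Finset.sum_mul] at hkey
      exact (Finset.sum_eq_sum_iff_of_le hterm).mp hkey
    have huA : u ∈ A := neighbors_subset_of_row_sum_eq_one hvA hrow1 u hadj
    have hQpos : 0 < mhQ G A v u := by rw [mhQ_apply_adj hvA huA hadj]; exact mhc_pos hadj
    have := htw u (Finset.mem_univ u)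
    have : φ v0 = φ u := mul_left_cancel₀ (ne_of_gt hQpos) this
    exact this.symm
  have hall := closed_set_eq_univ hG hcl (show v0 ∈ S from rfl)
  obtain ⟨w, -, hwA⟩ := Finset.exists_of_ssubset hA
  exact hwA (hSA w (hall w))

/-- maximum principle: the Green column is maximal on the diagonal. -/
lemma phi_le_diag (hG : G.Connected) (hA : A ⊂ Finset.univ) (hi : i ∈ A) {φ : V → ℝ}
    (hφ : ∀ v, φ v - ∑ u, mhQ G A v u * φ u = dirac i v) : ∀ v, φ v ≤ φ i := by
  have hpos := phi_nonneg hG hA hi hφ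
  obtain ⟨v0, -, hv0max⟩ :=
    Finset.exists_max_image Finset.univ φ ⟨i, Finset.mem_univ i⟩
  have hmaxle : ∀ u, φ u ≤ φ v0 := fun u => hv0max u (Finset.mem_univ u)
  rcases le_or_gt (φ v0) (φ i) with hle | hlt
  · exact fun v => le_trans (hmaxle v) hle
  exfalso
  have hM : 0 < φ v0 := lt_of_le_of_lt (hpos i) hlt
  set S : Set V := {v | φ v = φ v0} with hS
  have hSA : ∀ v ∈ S, v ∈ A := by
    intro v hvS
    by_contra hvA
    have heq := hφ v
    have hz : ∑ u, mhQ G A v u * φ u = 0 :=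
      Finset.sum_eq_zero fun u _ => by rw [mhQ_eq_zero_of_left hvA]; ring
    have hvi : v ≠ i := fun hc => hvA (hc ▸ hi)
    have hd : dirac i v = 0 := by unfold dirac; simp [hvi]
    have hvv0 : φ v = φ v0 := hvS
    rw [hz, sub_zero, hd] at heq
    rw [heq] at hvv0
    linarith
  have hcl : ∀ v ∈ S, ∀ u, G.Adj v u → u ∈ S := by
    intro v hvS u hadj
    have hvA := hSA v hvS
    have heq := hφ v
    have hvv0 : φ v = φ v0 := hvS
    have hvi : v ≠ i := by
      intro hc; subst hc; rw [hvv0] at hlt; exact lt_irrefl _ hlt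
    have hd : dirac i v = 0 := by unfold dirac; simp [hvi]
    have hterm : ∀ u' ∈ Finset.univ, mhQ G A v u' * φ u' ≤ mhQ G A v u' * φ v0 :=
      fun u' _ => mul_le_mul_of_nonneg_left (hmaxle u') (mhQ_nonneg A v u')
    have hsum1 : ∑ u', mhQ G A v u' * φ u' ≤ (∑ u', mhQ G A v u') * φ v0 := by
      rw [Finset.sum_mul]; exact Finset.sum_le_sum hterm
    have hrow := mhQ_row_sum_le_one (G := G) hvA
    have h2 : (∑ u', mhQ G A v u') * φ v0 ≤ φ v0 := by nlinarith
    have hsum2 : ∑ u', mhQ G A v u' * φ u' = φ v0 := by linarith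
    have hkey : ∑ u', mhQ G A v u' * φ u' = (∑ u', mhQ G A v u') * φ v0 := by linarith
    have hrow1 : ∑ u', mhQ G A v u' = 1 := by
      have hk2 : (∑ u', mhQ G A v u') * φ v0 = φ v0 := by linarith
      exact mul_right_cancel₀ (ne_of_gt hM)
        (by rw [hk2, one_mul] : (∑ u', mhQ G A v u') * φ v0 = 1 * φ v0)
    have htw : ∀ u' ∈ Finset.univ, mhQ G A v u' * φ u' = mhQ G A v u' * φ v0 := by
      rw [Finset.sum_mul] at hkey
      exact (Finset.sum_eq_sum_iff_of_le hterm).mp hkey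
    have huA : u ∈ A := neighbors_subset_of_row_sum_eq_one hvA hrow1 u hadj
    have hQpos : 0 < mhQ G A v u := by rw [mhQ_apply_adj hvA huA hadj]; exact mhc_pos hadj
    exact mul_left_cancel₀ (ne_of_gt hQpos) (htw u (Finset.mem_univ u))
  have hall := closed_set_eq_univ hG hcl (show v0 ∈ S from rfl)
  have : φ i = φ v0 := hall i
  rw [this] at hlt
  exact lt_irrefl _ hlt

lemma psi_nonneg (hG : G.Connected) (hA : A ⊂ Finset.univ) {ψ : V → ℝ}
    (hψ : ∀ v, ψ v - ∑ u, mhQ G A v u * ψ u = indA A v) : ∀ v, 0 ≤ ψ v := by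
  by_contra hneg
  push_neg at hneg
  obtain ⟨w0, hw0⟩ := hneg
  obtain ⟨v0, -, hv0min⟩ :=
    Finset.exists_min_image Finset.univ ψ ⟨w0, Finset.mem_univ w0⟩
  have hminle : ∀ u, ψ v0 ≤ ψ u := fun u => hv0min u (Finset.mem_univ u)
  have hm : ψ v0 < 0 := lt_of_le_of_lt (hminle w0) hw0
  have heq := hψ v0
  by_cases hvA : v0 ∈ A
  · have hd : indA A v0 = 1 := by unfold indA; simp [hvA]
    have hterm : ∀ u' ∈ Finset.univ, mhQ G A v0 u' * ψ v0 ≤ mhQ G A v0 u' * ψ u' :=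
      fun u' _ => mul_le_mul_of_nonneg_left (hminle u') (mhQ_nonneg A v0 u')
    have hsum1 : (∑ u', mhQ G A v0 u') * ψ v0 ≤ ∑ u', mhQ G A v0 u' * ψ u' := by
      rw [Finset.sum_mul]; exact Finset.sum_le_sum hterm
    have hrow := mhQ_row_sum_le_one (G := G) hvA
    have h2 : ψ v0 ≤ (∑ u', mhQ G A v0 u') * ψ v0 := by nlinarith
    rw [hd] at heq
    linarith
  · have hz : ∑ u, mhQ G A v0 u * ψ u = 0 :=
      Finset.sum_eq_zero fun u _ => by rw [mhQ_eq_zero_of_left hvA]; ring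
    have hd : indA A v0 = 0 := by unfold indA; simp [hvA]
    rw [hz, sub_zero, hd] at heq
    linarith

/-- existence of solutions of the Dirichlet problem. -/
lemma exists_solution (hG : G.Connected) (hA : A ⊂ Finset.univ) (f : V → ℝ) :
    ∃ φ : V → ℝ, ∀ v, φ v - ∑ u, mhQ G A v u * φ u = f v := by
  classical
  set M : Matrix V V ℝ := (1 : Matrix V V ℝ) - mhQ G A with hM
  have hker : ∀ x : V → ℝ, M *ᵥ x = 0 → x = 0 := by
    intro x hx
    have hxeq : ∀ v, x v = ∑ u, mhQ G A v u * x u := by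
      intro v
      have := congrFun hx v
      rw [hM, Matrix.sub_mulVec, Matrix.one_mulVec] at this
      have h2 : x v - (mhQ G A *ᵥ x) v = 0 := this
      have h3 : (mhQ G A *ᵥ x) v = ∑ u, mhQ G A v u * x u := by
        simp [Matrix.mulVec, dotProduct]
      linarith [h3 ▸ h2]
    by_contra hx0
    have hex : ∃ v, x v ≠ 0 := by
      by_contra hc; push_neg at hc; exact hx0 (funext fun v => hc v)
    obtain ⟨w0, hw0⟩ := hex
    obtain ⟨v0, -, hv0max⟩ :=
      Finset.exists_max_image Finset.univ (fun v => |x v|) ⟨w0, Finset.mem_univ w0⟩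
    have hmaxle : ∀ u, |x u| ≤ |x v0| := fun u => hv0max u (Finset.mem_univ u)
    have hm : 0 < |x v0| := lt_of_lt_of_le (abs_pos.mpr hw0) (hmaxle w0)
    set S : Set V := {v | |x v| = |x v0|} with hS
    have hSA : ∀ v ∈ S, v ∈ A := by
      intro v hvS
      by_contra hvA
      have hz : x v = 0 := by
        rw [hxeq v]
        exact Finset.sum_eq_zero fun u _ => by rw [mhQ_eq_zero_of_left hvA]; ring
      have : |x v| = |x v0| := hvS
      rw [hz] at this
      simp at this
      rw [← this] at hm
      exact lt_irrefl _ hm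
    have hcl : ∀ v ∈ S, ∀ u, G.Adj v u → u ∈ S := by
      intro v hvS u hadj
      have hvA := hSA v hvS
      have hvv0 : |x v| = |x v0| := hvS
      have habs : |x v| ≤ ∑ u', mhQ G A v u' * |x u'| := by
        rw [hxeq v]
        refine le_trans (Finset.abs_sum_le_sum_abs _ _) (le_of_eq ?_)
        exact Finset.sum_congr rfl fun u' _ => by
          rw [abs_mul, abs_of_nonneg (mhQ_nonneg A v u')]
      have hterm : ∀ u' ∈ Finset.univ, mhQ G A v u' * |x u'| ≤ mhQ G A v u' * |x v0| :=
        fun u' _ => mul_le_mul_of_nonneg_left (hmaxle u') (mhQ_nonneg A v u')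
      have hsum1 : ∑ u', mhQ G A v u' * |x u'| ≤ (∑ u', mhQ G A v u') * |x v0| := by
        rw [Finset.sum_mul]; exact Finset.sum_le_sum hterm
      have hrow := mhQ_row_sum_le_one (G := G) hvA
      have hrow0 : (0:ℝ) ≤ ∑ u', mhQ G A v u' :=
        Finset.sum_nonneg fun u' _ => mhQ_nonneg A v u'
      have h2 : (∑ u', mhQ G A v u') * |x v0| ≤ |x v0| := by nlinarith
      have hkey : ∑ u', mhQ G A v u' * |x u'| = (∑ u', mhQ G A v u') * |x v0| := by
        rw [hvv0] at habs; linarith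
      have hrow1 : ∑ u', mhQ G A v u' = 1 := by
        have hk2 : (∑ u', mhQ G A v u') * |x v0| = |x v0| := by
          rw [hvv0] at habs; linarith
        exact mul_right_cancel₀ (ne_of_gt hm)
          (by rw [hk2, one_mul] : (∑ u', mhQ G A v u') * |x v0| = 1 * |x v0|)
      have htw : ∀ u' ∈ Finset.univ, mhQ G A v u' * |x u'| = mhQ G A v u' * |x v0| := by
        rw [Finset.sum_mul] at hkey
        exact (Finset.sum_eq_sum_iff_of_le hterm).mp hkey
      have huA : u ∈ A := neighbors_subset_of_row_sum_eq_one hvA hrow1 u hadj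
      have hQpos : 0 < mhQ G A v u := by rw [mhQ_apply_adj hvA huA hadj]; exact mhc_pos hadj
      exact mul_left_cancel₀ (ne_of_gt hQpos) (htw u (Finset.mem_univ u))
    have hall := closed_set_eq_univ hG hcl (show v0 ∈ S from rfl)
    obtain ⟨w, -, hwA⟩ := Finset.exists_of_ssubset hA
    exact hwA (hSA w (hall w))
  have hdet : M.det ≠ 0 := by
    intro hdet
    obtain ⟨v, hv0, hv⟩ := (Matrix.exists_mulVec_eq_zero_iff).mpr hdet
    exact hv0 (hker v hv)
  refine ⟨M⁻¹ *ᵥ f, fun v => ?_⟩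
  have hMf : M *ᵥ (M⁻¹ *ᵥ f) = f := by
    rw [Matrix.mulVec_mulVec, Matrix.mul_nonsing_inv M (isUnit_iff_ne_zero.mpr hdet),
      Matrix.one_mulVec]
  have := congrFun hMf v
  rw [hM, Matrix.sub_mulVec, Matrix.one_mulVec] at this
  have h3 : (mhQ G A *ᵥ (M⁻¹ *ᵥ f)) v = ∑ u, mhQ G A v u * (M⁻¹ *ᵥ f) u := by
    simp [Matrix.mulVec, dotProduct]
  have h4 : (M⁻¹ *ᵥ f) v - (mhQ G A *ᵥ (M⁻¹ *ᵥ f)) v = f v := by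
    simpa [Pi.sub_apply] using this
  rw [h3] at h4
  exact h4

/-- symmetry pairing. -/
lemma pairing (φ ψ f g : V → ℝ)
    (hφ : ∀ v, φ v - ∑ u, mhQ G A v u * φ u = f v)
    (hψ : ∀ v, ψ v - ∑ u, mhQ G A v u * ψ u = g v) :
    ∑ v, ψ v * f v = ∑ v, φ v * g v := by
  have h1 : ∑ v, ψ v * f v = ∑ v, ψ v * φ v - ∑ v, ∑ u, ψ v * (mhQ G A v u * φ u) := by
    rw [← Finset.sum_sub_distrib]
    refine Finset.sum_congr rfl fun v _ => ?_
    rw [← hφ v, mul_sub, Finset.mul_sum]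
  have h2 : ∑ v, φ v * g v = ∑ v, φ v * ψ v - ∑ v, ∑ u, φ v * (mhQ G A v u * ψ u) := by
    rw [← Finset.sum_sub_distrib]
    refine Finset.sum_congr rfl fun v _ => ?_
    rw [← hψ v, mul_sub, Finset.mul_sum]
  have h3 : ∑ v, ∑ u, ψ v * (mhQ G A v u * φ u) =
      ∑ v, ∑ u, φ v * (mhQ G A v u * ψ u) := by
    rw [Finset.sum_comm]
    refine Finset.sum_congr rfl fun v _ => Finset.sum_congr rfl fun u _ => ?_
    rw [mhQ_symm]
    ring
  have h4 : ∑ v, ψ v * φ v = ∑ v, φ v * ψ v :=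
    Finset.sum_congr rfl fun v _ => mul_comm _ _
  rw [h1, h2, h3, h4]

end Principles

section Energy

variable {V : Type*} [Fintype V] [DecidableEq V] {G : SimpleGraph V} [DecidableRel G.Adj]
variable {A : Finset V} {i : V}

lemma phi_eq_zero_off (hi : i ∈ A) {φ : V → ℝ}
    (hφ : ∀ v, φ v - ∑ u, mhQ G A v u * φ u = dirac i v) (hv : v ∉ A) : φ v = 0 := by
  have heq := hφ v
  have hz : ∑ u, mhQ G A v u * φ u = 0 :=
    Finset.sum_eq_zero fun u _ => by rw [mhQ_eq_zero_of_left hv]; ring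
  have hvi : v ≠ i := fun hc => hv (hc ▸ hi)
  have hd : dirac i v = 0 := by unfold dirac; simp [hvi]
  rw [hz, sub_zero, hd] at heq
  exact heq

/-- the Laplacian form of the equation. -/
lemma laplacian_form (hi : i ∈ A) {φ : V → ℝ}
    (hφ : ∀ v, φ v - ∑ u, mhQ G A v u * φ u = dirac i v) (hv : v ∈ A) :
    ∑ u ∈ G.neighborFinset v, mhc G v u * (φ v - φ u) = dirac i v := by
  classical
  have hsupp : ∀ u, u ∉ A → φ u = 0 := fun u hu => phi_eq_zero_off hi hφ hu
  have e1 : ∑ u, mhQ G A v u * φ u = ∑ u, mhMatrix G v u * φ u := by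
    refine Finset.sum_congr rfl fun u _ => ?_
    by_cases hu : u ∈ A
    · have : mhQ G A v u = mhMatrix G v u := by simp [mhQ, hv, hu]
      rw [this]
    · rw [hsupp u hu]; ring
  have e3 : ∑ u, mhMatrix G v u * φ u = mhMatrix G v v * φ v +
      ∑ u ∈ Finset.univ.erase v, mhMatrix G v u * φ u :=
    (Finset.add_sum_erase _ _ (Finset.mem_univ v)).symm
  have e2 : ∑ u ∈ Finset.univ.erase v, mhMatrix G v u * φ u =
      ∑ u ∈ G.neighborFinset v, mhc G v u * φ u := by
    have e1' : ∑ u ∈ Finset.univ.erase v, mhMatrix G v u * φ u =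
        ∑ u ∈ Finset.univ.erase v, (if G.Adj v u then mhc G v u * φ u else 0) := by
      refine Finset.sum_congr rfl fun u hu => ?_
      by_cases hadj : G.Adj v u
      · rw [mhMatrix_adj hadj, if_pos hadj]
      · rw [mhMatrix_nonadj (Finset.ne_of_mem_erase hu) hadj, if_neg hadj]; ring
    rw [e1', ← Finset.sum_filter]
    refine Finset.sum_congr ?_ fun _ _ => rfl
    ext u
    simp only [Finset.mem_filter, Finset.mem_erase, Finset.mem_univ, true_and, and_true,
      SimpleGraph.mem_neighborFinset]
    exact ⟨fun h => h.2, fun h => ⟨h.ne', h⟩⟩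
  have e4 : ∑ u ∈ G.neighborFinset v, mhc G v u * (φ v - φ u) =
      (∑ u ∈ G.neighborFinset v, mhc G v u) * φ v -
      ∑ u ∈ G.neighborFinset v, mhc G v u * φ u := by
    rw [Finset.sum_mul, ← Finset.sum_sub_distrib]
    exact Finset.sum_congr rfl fun u _ => by ring
  have heq := hφ v
  rw [e1, e3, e2, mhMatrix_diag] at heq
  rw [e4]
  linarith

/-- the energy identity. -/
lemma energy_identity (hi : i ∈ A) {φ : V → ℝ}
    (hφ : ∀ v, φ v - ∑ u, mhQ G A v u * φ u = dirac i v) :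
    ∑ v, ∑ u ∈ G.neighborFinset v, mhc G v u * (φ v - φ u) ^ 2 = 2 * φ i := by
  classical
  have hswap : ∀ F : V → V → ℝ,
      ∑ v, ∑ u ∈ G.neighborFinset v, F v u = ∑ v, ∑ u ∈ G.neighborFinset v, F u v := by
    intro F
    have conv : ∀ F' : V → V → ℝ, ∀ v, ∑ u ∈ G.neighborFinset v, F' v u =
        ∑ u, if G.Adj v u then F' v u else 0 := by
      intro F' v
      rw [SimpleGraph.neighborFinset_eq_filter, Finset.sum_filter]
    calc ∑ v, ∑ u ∈ G.neighborFinset v, F v u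
        = ∑ v, ∑ u, if G.Adj v u then F v u else 0 :=
          Finset.sum_congr rfl fun v _ => conv F v
      _ = ∑ u, ∑ v, if G.Adj v u then F v u else 0 := Finset.sum_comm
      _ = ∑ u, ∑ v, if G.Adj u v then F v u else 0 := by
          refine Finset.sum_congr rfl fun u _ => Finset.sum_congr rfl fun v _ => ?_
          refine if_congr ⟨fun h => h.symm, fun h => h.symm⟩ rfl rfl
      _ = ∑ v, ∑ u ∈ G.neighborFinset v, F u v := by
          refine Finset.sum_congr rfl fun u _ => ?_
          rw [conv (fun a b => F b a) u]
  have hT : ∑ v, ∑ u ∈ G.neighborFinset v, mhc G v u * (φ v - φ u) * φ v = φ i := by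
    have : ∀ v, ∑ u ∈ G.neighborFinset v, mhc G v u * (φ v - φ u) * φ v =
        φ v * dirac i v := by
      intro v
      by_cases hv : v ∈ A
      · rw [← laplacian_form hi hφ hv, Finset.mul_sum]
        exact Finset.sum_congr rfl fun u _ => by ring
      · rw [phi_eq_zero_off hi hφ hv]
        simp
    rw [Finset.sum_congr rfl fun v _ => this v]
    have : ∀ v, φ v * dirac i v = if v = i then φ i else 0 := by
      intro v
      unfold dirac
      by_cases h : v = i
      · subst h; simp
      · simp [h]
    rw [Finset.sum_congr rfl fun v _ => this v, Finset.sum_ite_eq' Finset.univ i fun _ => φ i]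
    simp
  have hU : ∑ v, ∑ u ∈ G.neighborFinset v, mhc G v u * (φ v - φ u) * φ u = - φ i := by
    have hsw := hswap (fun v u => mhc G v u * (φ v - φ u) * φ u)
    have h5 : ∑ v, ∑ u ∈ G.neighborFinset v, mhc G u v * (φ u - φ v) * φ v
        + ∑ v, ∑ u ∈ G.neighborFinset v, mhc G v u * (φ v - φ u) * φ v = 0 := by
      rw [← Finset.sum_add_distrib]
      refine Finset.sum_eq_zero fun v _ => ?_
      rw [← Finset.sum_add_distrib]
      refine Finset.sum_eq_zero fun u _ => ?_
      rw [mhc_symm]; ring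
    rw [hsw]
    linarith [hT, h5]
  have expand : ∀ v, ∑ u ∈ G.neighborFinset v, mhc G v u * (φ v - φ u) ^ 2 =
      (∑ u ∈ G.neighborFinset v, mhc G v u * (φ v - φ u) * φ v) -
      ∑ u ∈ G.neighborFinset v, mhc G v u * (φ v - φ u) * φ u := by
    intro v
    rw [← Finset.sum_sub_distrib]
    exact Finset.sum_congr rfl fun u _ => by ring
  rw [Finset.sum_congr rfl fun v _ => expand v, Finset.sum_sub_distrib, hT, hU]
  ring

/-- the effective-resistance bound along a geodesic. -/
lemma phi_diag_le (hG : G.Connected) (hA : A ⊂ Finset.univ) (hi : i ∈ A) {φ : V → ℝ}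
    (hφ : ∀ v, φ v - ∑ u, mhQ G A v u * φ u = dirac i v) :
    φ i ≤ 6 * (A.card : ℝ) + 2 * (G.maxDegree : ℝ) := by
  classical
  have hsupp : ∀ u, u ∉ A → φ u = 0 := fun u hu => phi_eq_zero_off hi hφ hu
  have hpos := phi_nonneg hG hA hi hφ
  have hφi1 : 1 ≤ φ i := by
    have heq := hφ i
    have hterm : 0 ≤ ∑ u, mhQ G A i u * φ u :=
      Finset.sum_nonneg fun u _ => mul_nonneg (mhQ_nonneg A i u) (hpos u)
    have hd : dirac i i = 1 := by unfold dirac; simp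
    rw [hd] at heq
    linarith
  -- choose the closest vertex outside A and a geodesic to it
  obtain ⟨w1, -, hw1⟩ := Finset.exists_of_ssubset hA
  have hBne : (Finset.univ.filter (· ∉ A)).Nonempty := ⟨w1, by simp [hw1]⟩
  obtain ⟨w, hwB, hwmin⟩ := Finset.exists_min_image _ (fun u => G.dist i u) hBne
  have hwA : w ∉ A := by simpa using hwB
  have hmin : ∀ u, u ∉ A → G.dist i w ≤ G.dist i u := fun u hu => hwmin u (by simp [hu])
  obtain ⟨p, hp⟩ := hG.exists_walk_length_eq_dist i w
  set k := G.dist i w with hk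
  have hik : i ≠ w := fun hc => hwA (hc ▸ hi)
  have hk1 : 1 ≤ k := hG.pos_dist_of_ne hik
  set g : ℕ → V := fun j => p.getVert j with hg
  have hg0 : g 0 = i := p.getVert_zero
  have hgk : g k = w := by rw [hg]; simp only []; rw [← hp]; exact p.getVert_length
  have hadjg : ∀ j, j < k → G.Adj (g j) (g (j+1)) := fun j hj =>
    p.adj_getVert_succ (by omega)
  have hadj1 : ∀ {x y : V}, G.Adj x y → G.dist x y ≤ 1 := by
    intro x y h
    have := SimpleGraph.dist_le (SimpleGraph.Walk.cons h SimpleGraph.Walk.nil)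
    simpa using this
  have hub : ∀ a s, a + s ≤ k → G.dist (g a) (g (a + s)) ≤ s := by
    intro a s
    induction s with
    | zero => intro _; simp [SimpleGraph.dist_self]
    | succ n ihn =>
      intro hle
      have h1 := ihn (by omega)
      have h2 : G.dist (g (a + n)) (g (a + n + 1)) ≤ 1 :=
        hadj1 (hadjg (a + n) (by omega))
      have h3 := hG.dist_triangle (u := g a) (v := g (a + n)) (w := g (a + n + 1))
      have : a + (n + 1) = a + n + 1 := by omega
      rw [this]
      omega
  have hdib : ∀ j, j ≤ k → G.dist i (g j) ≤ j := by
    intro j hj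
    have := hub 0 j (by omega)
    rw [hg0] at this
    simpa using this
  have hlb : ∀ a b, a ≤ b → b ≤ k → (b - a : ℕ) ≤ G.dist (g a) (g b) := by
    intro a b hab hbk
    have t1 := hG.dist_triangle (u := i) (v := g a) (w := g b)
    have t1' := hG.dist_triangle (u := i) (v := g b) (w := w)
    have t2 := hdib a (le_trans hab hbk)
    have t3 : G.dist (g b) w ≤ k - b := by
      have := hub b (k - b) (by omega)
      rw [show b + (k - b) = k from by omega, hgk] at this
      exact this
    omega
  have hinj : ∀ a b, a ≤ k → b ≤ k → g a = g b → a = b := by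
    intro a b ha hb heq
    rcases le_total a b with h | h
    · have := hlb a b h hb; rw [heq, SimpleGraph.dist_self] at this; omega
    · have := hlb b a h ha; rw [← heq, SimpleGraph.dist_self] at this; omega
  have hwin : ∀ u a b, a ≤ b → b ≤ k → G.Adj (g a) u → G.Adj (g b) u → b ≤ a + 2 := by
    intro u a b hab hbk h1 h2
    have d1 : G.dist (g a) u ≤ 1 := hadj1 h1
    have d2 : G.dist u (g b) ≤ 1 := by rw [SimpleGraph.dist_comm]; exact hadj1 h2
    have htri := hG.dist_triangle (u := g a) (v := u) (w := g b)
    have := hlb a b hab hbk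
    omega
  have hgA : ∀ j, j < k → g j ∈ A := by
    intro j hj
    by_contra hc
    have h1 := hmin (g j) hc
    have h2 := hdib j (le_of_lt hj)
    omega
  have hintA : ∀ j, j + 2 ≤ k → ∀ u, G.Adj (g j) u → u ∈ A := by
    intro j hj u hadj
    by_contra hc
    have h1 := hmin u hc
    have h2 := hdib j (by omega)
    have h3 := hG.dist_triangle (u := i) (v := g j) (w := u)
    have h4 := hadj1 hadj
    omega
  -- degree counting along the geodesic
  have hD : ∑ j ∈ Finset.range (k - 1), G.degree (g j) ≤ 3 * A.card := by
    have hdeg : ∀ j, G.degree (g j) = ∑ u, if G.Adj (g j) u then 1 else 0 := by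
      intro j
      rw [← SimpleGraph.card_neighborFinset_eq_degree, SimpleGraph.neighborFinset_eq_filter]
      rw [Finset.card_eq_sum_ones, Finset.sum_filter]
    rw [Finset.sum_congr rfl fun j _ => hdeg j, Finset.sum_comm]
    have hcnt : ∀ u : V, (∑ j ∈ Finset.range (k - 1), if G.Adj (g j) u then 1 else 0) ≤
        if u ∈ A then 3 else 0 := by
      intro u
      have hcard : (∑ j ∈ Finset.range (k - 1), if G.Adj (g j) u then 1 else 0) =
          ((Finset.range (k - 1)).filter (fun j => G.Adj (g j) u)).card := by
        rw [Finset.card_eq_sum_ones, Finset.sum_filter]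
      rw [hcard]
      set T := (Finset.range (k - 1)).filter (fun j => G.Adj (g j) u) with hT
      by_cases huA : u ∈ A
      · rw [if_pos huA]
        rcases T.eq_empty_or_nonempty with hTe | hTne
        · rw [hTe]; simp
        · have hmem : ∀ j ∈ T, j < k - 1 ∧ G.Adj (g j) u := by
            intro j hj
            have := Finset.mem_filter.mp hj
            exact ⟨Finset.mem_range.mp this.1, this.2⟩
          set m := T.min' hTne with hm
          have hmT := T.min'_mem hTne
          have hsub : T ⊆ Finset.Icc m (m + 2) := by
            intro j hj
            have h1 := (hmem j hj).2
            have h2 := (hmem m hmT).2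
            have h3 : m ≤ j := T.min'_le j hj
            have h4 : j ≤ k := by have := (hmem j hj).1; omega
            have := hwin u m j h3 h4 h2.symm.symm h1
            rw [Finset.mem_Icc]
            exact ⟨h3, this⟩
          calc T.card ≤ (Finset.Icc m (m + 2)).card := Finset.card_le_card hsub
            _ = 3 := by rw [Nat.card_Icc]; omega
      · rw [if_neg huA]
        have : T = ∅ := by
          rw [Finset.eq_empty_iff_forall_notMem]
          intro j hj
          have h1 := Finset.mem_filter.mp hj
          have h2 : j < k - 1 := Finset.mem_range.mp h1.1
          exact huA (hintA j (by omega) u h1.2)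
        rw [this]; simp
    calc (∑ u, ∑ j ∈ Finset.range (k - 1), if G.Adj (g j) u then 1 else 0)
        ≤ ∑ u : V, if u ∈ A then 3 else 0 := Finset.sum_le_sum fun u _ => hcnt u
      _ = 3 * A.card := by
          rw [Finset.sum_ite_mem]
          simp [Finset.univ_inter, Finset.sum_const, mul_comm]
  -- the resistance bound, in ℕ
  have hR : ∑ j ∈ Finset.range k, max (G.degree (g j)) (G.degree (g (j + 1))) ≤
      6 * A.card + 2 * G.maxDegree := by
    have hk' : k - 1 + 1 = k := by omega
    have hsplit : ∑ j ∈ Finset.range k, max (G.degree (g j)) (G.degree (g (j + 1))) =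
        (∑ j ∈ Finset.range (k - 1), max (G.degree (g j)) (G.degree (g (j + 1))))
          + max (G.degree (g (k - 1))) (G.degree (g k)) := by
      have h0 := Finset.sum_range_succ
        (fun j => max (G.degree (g j)) (G.degree (g (j + 1)))) (k - 1)
      rw [hk'] at h0
      exact h0
    have hmax : ∀ j ∈ Finset.range (k - 1),
        max (G.degree (g j)) (G.degree (g (j + 1))) ≤ G.degree (g j) + G.degree (g (j + 1)) :=
      fun j _ => by omega
    have h1 : ∑ j ∈ Finset.range (k - 1), max (G.degree (g j)) (G.degree (g (j + 1))) ≤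
        ∑ j ∈ Finset.range (k - 1), (G.degree (g j) + G.degree (g (j + 1))) :=
      Finset.sum_le_sum hmax
    have h2 : ∑ j ∈ Finset.range (k - 1), (G.degree (g j) + G.degree (g (j + 1))) =
        (∑ j ∈ Finset.range (k - 1), G.degree (g j))
          + ∑ j ∈ Finset.range (k - 1), G.degree (g (j + 1)) := Finset.sum_add_distrib
    have h3 : (∑ j ∈ Finset.range (k - 1), G.degree (g (j + 1))) + G.degree (g 0) =
        (∑ j ∈ Finset.range (k - 1), G.degree (g j)) + G.degree (g (k - 1)) := by
      have e1 : ∑ j ∈ Finset.range (k - 1 + 1), G.degree (g j) =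
          (∑ j ∈ Finset.range (k - 1), G.degree (g (j + 1))) + G.degree (g 0) :=
        Finset.sum_range_succ' _ _
      have e2 : ∑ j ∈ Finset.range (k - 1 + 1), G.degree (g j) =
          (∑ j ∈ Finset.range (k - 1), G.degree (g j)) + G.degree (g (k - 1)) :=
        Finset.sum_range_succ _ _
      omega
    have hΔ1 : G.degree (g (k - 1)) ≤ G.maxDegree := G.degree_le_maxDegree _
    have hΔ2 : max (G.degree (g (k - 1))) (G.degree (g k)) ≤ G.maxDegree := by
      have := G.degree_le_maxDegree (g k)
      omega
    omega
  -- energy along the path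
  have hEtot := energy_identity hi hφ
  have hpathE : ∑ j ∈ Finset.range k, mhc G (g j) (g (j + 1)) * (φ (g j) - φ (g (j + 1))) ^ 2
      ≤ φ i := by
    set wfn : V × V → ℝ :=
      fun z => if G.Adj z.1 z.2 then mhc G z.1 z.2 * (φ z.1 - φ z.2) ^ 2 else 0 with hwfn
    have htot : ∑ z : V × V, wfn z = 2 * φ i := by
      rw [← hEtot, Fintype.sum_prod_type]
      refine Finset.sum_congr rfl fun v _ => ?_
      rw [SimpleGraph.neighborFinset_eq_filter, Finset.sum_filter]
    set F : ℕ × Bool → V × V :=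
      fun jb => if jb.2 then (g jb.1, g (jb.1 + 1)) else (g (jb.1 + 1), g jb.1) with hF
    set s : Finset (ℕ × Bool) := (Finset.range k) ×ˢ (Finset.univ : Finset Bool) with hs
    have hFinj : ∀ a ∈ s, ∀ b ∈ s, F a = F b → a = b := by
      rintro ⟨a, ba⟩ ha ⟨b, bb⟩ hb hFab
      have hak : a < k := by
        have := Finset.mem_product.mp ha; exact Finset.mem_range.mp this.1
      have hbk : b < k := by
        have := Finset.mem_product.mp hb; exact Finset.mem_range.mp this.1
      cases ba <;> cases bb <;> simp only [hF, if_true, if_false, Bool.false_eq_true,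
        Prod.mk.injEq] at hFab
      · have e1 : a + 1 = b + 1 := hinj _ _ (by omega) (by omega) hFab.1
        have : a = b := by omega
        simp [this]
      · have e1 : a + 1 = b := hinj _ _ (by omega) (by omega) hFab.1
        have e2 : a = b + 1 := hinj _ _ (by omega) (by omega) hFab.2
        omega
      · have e1 : a = b + 1 := hinj _ _ (by omega) (by omega) hFab.1
        have e2 : a + 1 = b := hinj _ _ (by omega) (by omega) hFab.2
        omega
      · have e1 : a = b := hinj _ _ (by omega) (by omega) hFab.1
        simp [e1]
    have himg : ∑ z ∈ s.image F, wfn z = ∑ jb ∈ s, wfn (F jb) := Finset.sum_image hFinj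
    have hwnonneg : ∀ z : V × V, 0 ≤ wfn z := by
      intro z
      simp only [hwfn]
      split
      · exact mul_nonneg (mhc_nonneg _ _) (sq_nonneg _)
      · exact le_rfl
    have hsub : ∑ z ∈ s.image F, wfn z ≤ ∑ z : V × V, wfn z :=
      Finset.sum_le_sum_of_subset_of_nonneg (Finset.subset_univ _)
        (fun z _ _ => hwnonneg z)
    have hsval : ∑ jb ∈ s, wfn (F jb) =
        2 * ∑ j ∈ Finset.range k, mhc G (g j) (g (j + 1)) * (φ (g j) - φ (g (j + 1))) ^ 2 := by
      rw [hs, Finset.sum_product]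
      rw [Finset.mul_sum]
      refine Finset.sum_congr rfl fun j hj => ?_
      have hjk : j < k := Finset.mem_range.mp hj
      have hadj := hadjg j hjk
      have e1 : ∑ b : Bool, wfn (F (j, b)) = wfn (F (j, true)) + wfn (F (j, false)) := by
        rw [Fintype.sum_bool]
      rw [e1]
      have e2 : wfn (F (j, true)) = mhc G (g j) (g (j + 1)) * (φ (g j) - φ (g (j + 1))) ^ 2 := by
        simp only [hF, hwfn, if_true]
        rw [if_pos hadj]
      have e3 : wfn (F (j, false)) = mhc G (g j) (g (j + 1)) * (φ (g j) - φ (g (j + 1))) ^ 2 := by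
        simp only [hF, hwfn, Bool.false_eq_true, if_false]
        rw [if_pos hadj.symm, mhc_symm]
        ring
      rw [e2, e3]
      ring
    rw [hsval] at himg
    rw [htot] at hsub
    linarith [himg ▸ hsub]
  -- telescoping and Cauchy-Schwarz
  have htel : ∑ j ∈ Finset.range k, (φ (g j) - φ (g (j + 1))) = φ i := by
    rw [Finset.sum_range_sub' (fun j => φ (g j)) k, hg0, hgk, hsupp w hwA, sub_zero]
  have hCS := Finset.sum_mul_sq_le_sq_mul_sq (Finset.range k)
    (fun j => Real.sqrt (mhc G (g j) (g (j + 1))) * (φ (g j) - φ (g (j + 1))))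
    (fun j => (Real.sqrt (mhc G (g j) (g (j + 1))))⁻¹)
  have hprod : ∀ j ∈ Finset.range k,
      (Real.sqrt (mhc G (g j) (g (j + 1))) * (φ (g j) - φ (g (j + 1)))) *
        (Real.sqrt (mhc G (g j) (g (j + 1))))⁻¹ = φ (g j) - φ (g (j + 1)) := by
    intro j hj
    have hc := mhc_pos (hadjg j (Finset.mem_range.mp hj))
    have hsq : Real.sqrt (mhc G (g j) (g (j + 1))) ≠ 0 :=
      ne_of_gt (Real.sqrt_pos.mpr hc)
    field_simp
  have hsq1 : ∀ j ∈ Finset.range k,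
      (Real.sqrt (mhc G (g j) (g (j + 1))) * (φ (g j) - φ (g (j + 1)))) ^ 2 =
      mhc G (g j) (g (j + 1)) * (φ (g j) - φ (g (j + 1))) ^ 2 := by
    intro j hj
    have hc := mhc_nonneg (G := G) (g j) (g (j + 1))
    rw [mul_pow, Real.sq_sqrt hc]
  have hsq2 : ∀ j ∈ Finset.range k,
      ((Real.sqrt (mhc G (g j) (g (j + 1))))⁻¹) ^ 2 =
      ((max (G.degree (g j)) (G.degree (g (j + 1))) : ℕ) : ℝ) := by
    intro j hj
    have hadj := hadjg j (Finset.mem_range.mp hj)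
    have hc := mhc_pos hadj
    rw [← Real.sqrt_inv, Real.sq_sqrt (by positivity), mhc_inv_eq hadj]
  rw [Finset.sum_congr rfl hprod, htel] at hCS
  rw [Finset.sum_congr rfl hsq1, Finset.sum_congr rfl hsq2] at hCS
  have hRreal : ∑ j ∈ Finset.range k, ((max (G.degree (g j)) (G.degree (g (j + 1))) : ℕ) : ℝ)
      ≤ 6 * (A.card : ℝ) + 2 * (G.maxDegree : ℝ) := by
    rw [← Nat.cast_sum]
    calc ((∑ j ∈ Finset.range k, max (G.degree (g j)) (G.degree (g (j + 1))) : ℕ) : ℝ)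
        ≤ ((6 * A.card + 2 * G.maxDegree : ℕ) : ℝ) := by exact_mod_cast hR
      _ = 6 * (A.card : ℝ) + 2 * (G.maxDegree : ℝ) := by push_cast; ring
  have hRnonneg : (0:ℝ) ≤ ∑ j ∈ Finset.range k,
      ((max (G.degree (g j)) (G.degree (g (j + 1))) : ℕ) : ℝ) :=
    Finset.sum_nonneg fun j _ => by positivity
  have hfinal : φ i ^ 2 ≤ φ i * (6 * (A.card : ℝ) + 2 * (G.maxDegree : ℝ)) := by
    calc φ i ^ 2 ≤ (∑ j ∈ Finset.range k, mhc G (g j) (g (j + 1)) *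
          (φ (g j) - φ (g (j + 1))) ^ 2) *
          ∑ j ∈ Finset.range k, ((max (G.degree (g j)) (G.degree (g (j + 1))) : ℕ) : ℝ) := hCS
      _ ≤ φ i * (6 * (A.card : ℝ) + 2 * (G.maxDegree : ℝ)) := by
          apply mul_le_mul hpathE hRreal hRnonneg (le_trans (by norm_num) hφi1)
  nlinarith [hφi1]

end Energy

section Traj

variable {V : Type*} [Fintype V] [DecidableEq V] {G : SimpleGraph V} [DecidableRel G.Adj]
variable {A : Finset V} {i : V}

lemma indicator_setOf {α : Type*} (P : α → Prop) [DecidablePred P] (f : α → ℝ) (x : α) :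
    Set.indicator {y | P y} f x = if P x then f x else 0 := by
  by_cases h : P x
  · rw [if_pos h]
    exact Set.indicator_of_mem (by simpa using h) f
  · rw [if_neg h]
    exact Set.indicator_of_notMem (by simpa using h) f

lemma hQind (G : SimpleGraph V) [DecidableRel G.Adj] (A : Finset V) (v u : V) :
    mhQ G A v u = indA A v * (indA A u * mhMatrix G v u) := by
  unfold indA
  simp only [mhQ, Matrix.of_apply]
  by_cases hv : v ∈ A <;> by_cases hu : u ∈ A <;> simp [hv, hu]

lemma mulVec_apply' (M : Matrix V V ℝ) (x : V → ℝ) (v : V) :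
    (M *ᵥ x) v = ∑ u, M v u * x u := rfl

lemma rvec_step (G : SimpleGraph V) [DecidableRel G.Adj] (A : Finset V) (t : ℕ) (v : V) :
    ((mhQ G A ^ (t + 1)) *ᵥ indA A) v = ∑ u, mhQ G A v u * ((mhQ G A ^ t) *ᵥ indA A) u := by
  rw [pow_succ', ← Matrix.mulVec_mulVec, mulVec_apply']

/-- decomposition of a trajectory sum via `Fin.cons`. -/
lemma sum_pi_succ (t : ℕ) (F : (Fin (t + 2) → V) → ℝ) :
    ∑ x : Fin (t + 2) → V, F x = ∑ v : V, ∑ y : Fin (t + 1) → V, F (Fin.cons v y) := by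
  refine Eq.trans (Fintype.sum_equiv ((Fin.consEquiv (fun _ : Fin (t + 2) => V)).symm) F
    (fun p => F (Fin.cons p.1 p.2)) ?_)
    (Fintype.sum_prod_type (f := fun p : V × (Fin (t + 1) → V) => F (Fin.cons p.1 p.2)))
  intro x
  exact (congrArg F (Fin.cons_self_tail x)).symm

lemma prod_cons_succ (t : ℕ) (P : Matrix V V ℝ) (v : V) (y : Fin (t + 1) → V) :
    (∏ τ : Fin (t + 1), P ((Fin.cons v y : Fin (t+2) → V) τ.castSucc)
        ((Fin.cons v y : Fin (t+2) → V) τ.succ)) =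
      P v (y 0) * ∏ τ : Fin t, P (y τ.castSucc) (y τ.succ) := by
  rw [Fin.prod_univ_succ]
  have h1 : ((Fin.cons v y : Fin (t+2) → V) ((0 : Fin (t+1)).castSucc)) = v := by
    rw [Fin.castSucc_zero, Fin.cons_zero]
  have h2 : ((Fin.cons v y : Fin (t+2) → V) ((0 : Fin (t+1)).succ)) = y 0 := Fin.cons_succ _ _ _
  rw [h1, h2]
  refine congrArg (P v (y 0) * ·) (Finset.prod_congr rfl fun τ _ => ?_)
  have h3 : ((Fin.cons v y : Fin (t+2) → V) (τ.succ.castSucc)) = y τ.castSucc := by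
    rw [← Fin.succ_castSucc, Fin.cons_succ]
  have h4 : ((Fin.cons v y : Fin (t+2) → V) (τ.succ.succ)) = y τ.succ := Fin.cons_succ _ _ _
  try rw [h3]
  try rw [h4]

lemma prTraj_all (t : ℕ) (μ : V → ℝ) :
    prTraj (mhMatrix G) μ t {x | ∀ s : Fin (t + 1), x s ∈ A} =
      ∑ v, (indA A v * μ v) * ((mhQ G A ^ t) *ᵥ indA A) v := by
  classical
  induction t generalizing μ with
  | zero =>
    unfold prTraj
    have e0 : ∀ x : Fin 1 → V,
        Set.indicator {x : Fin 1 → V | ∀ s : Fin 1, x s ∈ A}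
          (fun y => μ (y 0) * ∏ τ : Fin 0, mhMatrix G (y τ.castSucc) (y τ.succ)) x =
        if x 0 ∈ A then μ (x 0) else 0 := by
      intro x
      rw [indicator_setOf (fun x : Fin 1 → V => ∀ s : Fin 1, x s ∈ A)]
      by_cases h : x 0 ∈ A
      · rw [if_pos (fun s => by rw [Fin.eq_zero s]; exact h), if_pos h]
        simp
      · rw [if_neg (fun hc => h (hc 0)), if_neg h]
    rw [Finset.sum_congr rfl fun x _ => e0 x]
    have e1 : (∑ x : Fin 1 → V, if x 0 ∈ A then μ (x 0) else 0) =
        ∑ v : V, if v ∈ A then μ v else 0 :=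
      Fintype.sum_equiv (Equiv.funUnique (Fin 1) V) _ _ (fun x => rfl)
    rw [e1]
    refine Finset.sum_congr rfl fun v _ => ?_
    unfold indA
    rw [pow_zero, Matrix.one_mulVec]
    by_cases hv : v ∈ A <;> simp [hv]
  | succ t ih =>
    unfold prTraj
    have e0 : ∀ x : Fin (t + 2) → V,
        Set.indicator {x : Fin (t + 2) → V | ∀ s : Fin (t + 2), x s ∈ A}
          (fun y => μ (y 0) * ∏ τ : Fin (t + 1), mhMatrix G (y τ.castSucc) (y τ.succ)) x =
        if ∀ s : Fin (t + 2), x s ∈ A then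
          μ (x 0) * ∏ τ : Fin (t + 1), mhMatrix G (x τ.castSucc) (x τ.succ) else 0 := fun x =>
      indicator_setOf (fun x : Fin (t + 2) → V => ∀ s : Fin (t + 2), x s ∈ A) _ x
    rw [Finset.sum_congr rfl fun x _ => e0 x, sum_pi_succ]
    have e1 : ∀ v, ∀ y : Fin (t + 1) → V,
        (if ∀ s : Fin (t + 2), (Fin.cons v y : Fin (t+2) → V) s ∈ A then
          μ ((Fin.cons v y : Fin (t+2) → V) 0) *
            ∏ τ : Fin (t + 1), mhMatrix G ((Fin.cons v y : Fin (t+2) → V) τ.castSucc)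
              ((Fin.cons v y : Fin (t+2) → V) τ.succ) else 0) =
        (if v ∈ A then μ v else 0) *
          (if ∀ s : Fin (t + 1), y s ∈ A then
            mhMatrix G v (y 0) * ∏ τ : Fin t, mhMatrix G (y τ.castSucc) (y τ.succ) else 0) := by
      intro v y
      have hcond : (∀ s : Fin (t + 2), (Fin.cons v y : Fin (t+2) → V) s ∈ A) ↔
          v ∈ A ∧ ∀ s : Fin (t + 1), y s ∈ A := by
        rw [Fin.forall_fin_succ]
        simp [Fin.cons_zero, Fin.cons_succ]
      by_cases h1 : v ∈ A
      · by_cases h2 : ∀ s : Fin (t + 1), y s ∈ A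
        · rw [if_pos (hcond.mpr ⟨h1, h2⟩), if_pos h1, if_pos h2]
          try rw [prod_cons_succ]
          try rw [Fin.cons_zero]
          try ring
        · rw [if_neg (fun hc => h2 (hcond.mp hc).2), if_pos h1, if_neg h2, mul_zero]
      · rw [if_neg (fun hc => h1 (hcond.mp hc).1), if_neg h1, zero_mul]
    rw [Finset.sum_congr rfl fun v _ =>
      Finset.sum_congr rfl fun y _ => e1 v y]
    have e2 : ∀ v, ∑ y : Fin (t + 1) → V,
        ((if v ∈ A then μ v else 0) *
          (if ∀ s : Fin (t + 1), y s ∈ A then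
            mhMatrix G v (y 0) * ∏ τ : Fin t, mhMatrix G (y τ.castSucc) (y τ.succ) else 0)) =
        (if v ∈ A then μ v else 0) *
          ∑ u, (indA A u * mhMatrix G v u) * ((mhQ G A ^ t) *ᵥ indA A) u := by
      intro v
      rw [← Finset.mul_sum]
      congr 1
      have := ih (fun u => mhMatrix G v u)
      unfold prTraj at this
      rw [← this]
      refine Finset.sum_congr rfl fun y _ => ?_
      rw [indicator_setOf (fun y : Fin (t + 1) → V => ∀ s : Fin (t + 1), y s ∈ A)]
    rw [Finset.sum_congr rfl fun v _ => e2 v]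
    refine Finset.sum_congr rfl fun v _ => ?_
    rw [rvec_step]
    unfold indA
    by_cases hv : v ∈ A
    · rw [if_pos hv]
      simp only [hv, if_true, one_mul, Finset.mul_sum]
      refine Finset.sum_congr rfl fun u _ => ?_
      rw [hQind]
      unfold indA
      simp only [hv, if_true, one_mul]
      try ring
    · rw [if_neg hv]
      simp only [hv, if_false, zero_mul]
      try
        rw [Finset.sum_eq_zero]
        intro u _
        rw [hQind]
        unfold indA
        simp only [hv, if_false]
        ring

lemma prTraj_tail (hi : i ∈ A) (t : ℕ) :
    prTraj (mhMatrix G) (dirac i) t {x | ∀ s : Fin (t + 1), 1 ≤ s.val → x s ∈ A} =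
      ((mhQ G A ^ t) *ᵥ indA A) i := by
  classical
  cases t with
  | zero =>
    unfold prTraj
    have e0 : ∀ x : Fin 1 → V,
        Set.indicator {x : Fin 1 → V | ∀ s : Fin 1, 1 ≤ s.val → x s ∈ A}
          (fun y => dirac i (y 0) * ∏ τ : Fin 0, mhMatrix G (y τ.castSucc) (y τ.succ)) x =
        dirac i (x 0) := by
      intro x
      rw [indicator_setOf (fun x : Fin 1 → V => ∀ s : Fin 1, 1 ≤ s.val → x s ∈ A)]
      rw [if_pos (fun s hs => absurd hs (by rw [Fin.eq_zero s]; norm_num))]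
      simp
    rw [Finset.sum_congr rfl fun x _ => e0 x]
    have e1 : (∑ x : Fin 1 → V, dirac i (x 0)) = ∑ v : V, dirac i v :=
      Fintype.sum_equiv (Equiv.funUnique (Fin 1) V) _ _ (fun x => rfl)
    rw [e1]
    rw [pow_zero, Matrix.one_mulVec]
    unfold dirac indA
    simp [hi]
  | succ t =>
    unfold prTraj
    have e0 : ∀ x : Fin (t + 2) → V,
        Set.indicator {x : Fin (t + 2) → V | ∀ s : Fin (t + 2), 1 ≤ s.val → x s ∈ A}
          (fun y => dirac i (y 0) * ∏ τ : Fin (t + 1), mhMatrix G (y τ.castSucc) (y τ.succ)) x =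
        if ∀ s : Fin (t + 2), 1 ≤ s.val → x s ∈ A then
          dirac i (x 0) * ∏ τ : Fin (t + 1), mhMatrix G (x τ.castSucc) (x τ.succ) else 0 :=
      fun x =>
        indicator_setOf (fun x : Fin (t + 2) → V => ∀ s : Fin (t + 2), 1 ≤ s.val → x s ∈ A) _ x
    rw [Finset.sum_congr rfl fun x _ => e0 x, sum_pi_succ]
    have e1 : ∀ v, ∀ y : Fin (t + 1) → V,
        (if ∀ s : Fin (t + 2), 1 ≤ s.val → (Fin.cons v y : Fin (t+2) → V) s ∈ A then
          dirac i ((Fin.cons v y : Fin (t+2) → V) 0) *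
            ∏ τ : Fin (t + 1), mhMatrix G ((Fin.cons v y : Fin (t+2) → V) τ.castSucc)
              ((Fin.cons v y : Fin (t+2) → V) τ.succ) else 0) =
        dirac i v *
          (if ∀ s : Fin (t + 1), y s ∈ A then
            mhMatrix G v (y 0) * ∏ τ : Fin t, mhMatrix G (y τ.castSucc) (y τ.succ) else 0) := by
      intro v y
      have hcond : (∀ s : Fin (t + 2), 1 ≤ s.val → (Fin.cons v y : Fin (t+2) → V) s ∈ A) ↔
          (∀ s : Fin (t + 1), y s ∈ A) := by
        rw [Fin.forall_fin_succ]
        simp only [Fin.cons_zero, Fin.cons_succ, Fin.val_succ, Fin.val_zero]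
        constructor
        · intro h s
          exact h.2 s (by omega)
        · intro h
          exact ⟨by norm_num, fun s _ => h s⟩
      by_cases h2 : ∀ s : Fin (t + 1), y s ∈ A
      · rw [if_pos (hcond.mpr h2), if_pos h2]
        try rw [prod_cons_succ]
        try rw [Fin.cons_zero]
        try ring
      · rw [if_neg (fun hc => h2 (hcond.mp hc)), if_neg h2, mul_zero]
    rw [Finset.sum_congr rfl fun v _ => Finset.sum_congr rfl fun y _ => e1 v y]
    have e2 : ∀ v, ∑ y : Fin (t + 1) → V,
        (dirac i v *
          (if ∀ s : Fin (t + 1), y s ∈ A then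
            mhMatrix G v (y 0) * ∏ τ : Fin t, mhMatrix G (y τ.castSucc) (y τ.succ) else 0)) =
        dirac i v * ∑ u, (indA A u * mhMatrix G v u) * ((mhQ G A ^ t) *ᵥ indA A) u := by
      intro v
      rw [← Finset.mul_sum]
      congr 1
      have := prTraj_all (G := G) (A := A) t (fun u => mhMatrix G v u)
      unfold prTraj at this
      rw [← this]
      refine Finset.sum_congr rfl fun y _ => ?_
      rw [indicator_setOf (fun y : Fin (t + 1) → V => ∀ s : Fin (t + 1), y s ∈ A)]
    rw [Finset.sum_congr rfl fun v _ => e2 v]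
    have e3 : ∀ v, dirac i v * ∑ u, (indA A u * mhMatrix G v u) * ((mhQ G A ^ t) *ᵥ indA A) u =
        if v = i then ∑ u, (indA A u * mhMatrix G i u) * ((mhQ G A ^ t) *ᵥ indA A) u else 0 := by
      intro v
      unfold dirac
      by_cases h : v = i
      · subst h; simp
      · simp [h]
    rw [Finset.sum_congr rfl fun v _ => e3 v, Finset.sum_ite_eq' Finset.univ i]
    simp only [Finset.mem_univ, if_true]
    rw [rvec_step]
    refine Finset.sum_congr rfl fun u _ => ?_
    rw [hQind]
    unfold indA
    simp only [hi, if_true, one_mul]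
    try ring

lemma rvec_nonneg (A : Finset V) (t : ℕ) (v : V) : 0 ≤ ((mhQ G A ^ t) *ᵥ indA A) v := by
  induction t generalizing v with
  | zero =>
    rw [pow_zero, Matrix.one_mulVec]
    unfold indA
    split <;> norm_num
  | succ t ih =>
    rw [rvec_step]
    exact Finset.sum_nonneg fun u _ => mul_nonneg (mhQ_nonneg A v u) (ih u)

lemma partial_sum_le (hG : G.Connected) (hA : A ⊂ Finset.univ) {ψ : V → ℝ}
    (hψ : ∀ v, ψ v - ∑ u, mhQ G A v u * ψ u = indA A v) (T : ℕ) :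
    ∀ v, ∑ t ∈ Finset.range T, ((mhQ G A ^ t) *ᵥ indA A) v ≤ ψ v := by
  induction T with
  | zero =>
    intro v
    simpa using psi_nonneg hG hA hψ v
  | succ T ih =>
    intro v
    have hsplit : ∑ t ∈ Finset.range (T + 1), ((mhQ G A ^ t) *ᵥ indA A) v =
        (∑ t ∈ Finset.range T, ((mhQ G A ^ (t + 1)) *ᵥ indA A) v) +
          ((mhQ G A ^ 0) *ᵥ indA A) v :=
      Finset.sum_range_succ' _ _
    have h0 : ((mhQ G A ^ 0) *ᵥ indA A) v = indA A v := by
      rw [pow_zero, Matrix.one_mulVec]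
    have hstep : ∑ t ∈ Finset.range T, ((mhQ G A ^ (t + 1)) *ᵥ indA A) v =
        ∑ u, mhQ G A v u * ∑ t ∈ Finset.range T, ((mhQ G A ^ t) *ᵥ indA A) u := by
      rw [Finset.sum_congr rfl fun t _ => rvec_step G A t v, Finset.sum_comm]
      exact Finset.sum_congr rfl fun u _ => (Finset.mul_sum _ _ _).symm
    have hmono : ∑ u, mhQ G A v u * ∑ t ∈ Finset.range T, ((mhQ G A ^ t) *ᵥ indA A) u ≤
        ∑ u, mhQ G A v u * ψ u :=
      Finset.sum_le_sum fun u _ => mul_le_mul_of_nonneg_left (ih u) (mhQ_nonneg A v u)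
    have hψv := hψ v
    rw [hsplit, h0, hstep]
    linarith

end Traj

/-- For a connected graph `G`, a proper subset `A ⊊ V` and `i ∈ A`, the expected time for
the Metropolis–Hastings walk started at `i` to reach a vertex outside `A` is less than
`(|A|+1)(6|A| + 2Δ)`.  The expectation `E_i T_{V∖A}` is written as
`∑' t, Pr_i[T_{V∖A} > t]`, where `T_{V∖A} > t` is the event that the walk stays in `A`
at all times `1,…,t`. -/
theorem mh_escape_time {V : Type*} [Fintype V] [DecidableEq V] (G : SimpleGraph V)
    [DecidableRel G.Adj] (hG : G.Connected)
    (A : Finset V) (hA : A ⊂ Finset.univ) (i : V) (hi : i ∈ A) :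
    (∑' t : ℕ, ENNReal.ofReal (prTraj (mhMatrix G) (dirac i) t
        {x | ∀ s : Fin (t + 1), 1 ≤ s.val → x s ∈ A})) <
      ENNReal.ofReal (((A.card : ℝ) + 1) * (6 * (A.card : ℝ) + 2 * (G.maxDegree : ℝ))) := by
  classical
  obtain ⟨ψ, hψ⟩ := exists_solution (G := G) hG hA (indA A)
  obtain ⟨φ, hφ⟩ := exists_solution (G := G) hG hA (dirac i)
  have hpair := pairing (G := G) (A := A) φ ψ (dirac i) (indA A) hφ hψ
  have hψi : ψ i = ∑ v, φ v * indA A v := by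
    rw [← hpair]
    have : ∀ v, ψ v * dirac i v = if v = i then ψ i else 0 := by
      intro v
      unfold dirac
      by_cases h : v = i
      · subst h; simp
      · simp [h]
    rw [Finset.sum_congr rfl fun v _ => this v, Finset.sum_ite_eq' Finset.univ i]
    simp
  have hφmax := phi_le_diag hG hA hi hφ
  have hφpos := phi_nonneg hG hA hi hφ
  have hφbound := phi_diag_le hG hA hi hφ
  have hcard1 : 1 ≤ A.card := Finset.card_pos.mpr ⟨i, hi⟩
  have hsum : ∑ v, φ v * indA A v ≤ (A.card : ℝ) * φ i := by
    have e1 : ∑ v, φ v * indA A v = ∑ v ∈ A, φ v := by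
      unfold indA
      rw [Finset.sum_congr rfl fun v _ => (by split <;> simp :
        φ v * (if v ∈ A then (1:ℝ) else 0) = if v ∈ A then φ v else 0)]
      rw [Finset.sum_ite_mem, Finset.univ_inter]
    rw [e1]
    calc ∑ v ∈ A, φ v ≤ ∑ _v ∈ A, φ i := Finset.sum_le_sum fun v _ => hφmax v
      _ = (A.card : ℝ) * φ i := by rw [Finset.sum_const, nsmul_eq_mul]
  have hcard1' : (1:ℝ) ≤ (A.card : ℝ) := by exact_mod_cast hcard1
  have hXpos : (0:ℝ) < 6 * (A.card : ℝ) + 2 * (G.maxDegree : ℝ) := by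
    have : (0:ℝ) ≤ (G.maxDegree : ℝ) := Nat.cast_nonneg _
    nlinarith
  have hψibound : ψ i ≤ (A.card : ℝ) * (6 * (A.card : ℝ) + 2 * (G.maxDegree : ℝ)) := by
    rw [hψi]
    calc ∑ v, φ v * indA A v ≤ (A.card : ℝ) * φ i := hsum
      _ ≤ (A.card : ℝ) * (6 * (A.card : ℝ) + 2 * (G.maxDegree : ℝ)) := by
          apply mul_le_mul_of_nonneg_left hφbound (by linarith)
  have hrw : (∑' t : ℕ, ENNReal.ofReal (prTraj (mhMatrix G) (dirac i) t
        {x | ∀ s : Fin (t + 1), 1 ≤ s.val → x s ∈ A})) =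
      ∑' t : ℕ, ENNReal.ofReal (((mhQ G A ^ t) *ᵥ indA A) i) :=
    tsum_congr fun t => by rw [prTraj_tail hi t]
  have hfin : ∀ s : Finset ℕ,
      ∑ t ∈ s, ENNReal.ofReal (((mhQ G A ^ t) *ᵥ indA A) i) ≤ ENNReal.ofReal (ψ i) := by
    intro s
    rw [← ENNReal.ofReal_sum_of_nonneg (fun t _ => rvec_nonneg A t i)]
    apply ENNReal.ofReal_le_ofReal
    calc ∑ t ∈ s, ((mhQ G A ^ t) *ᵥ indA A) i
        ≤ ∑ t ∈ Finset.range (s.sup id + 1), ((mhQ G A ^ t) *ᵥ indA A) i := by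
          apply Finset.sum_le_sum_of_subset_of_nonneg
          · intro t ht
            refine Finset.mem_range.mpr ?_
            have h5 : t ≤ s.sup id := Finset.le_sup (f := id) ht
            omega
          · exact fun t _ _ => rvec_nonneg A t i
      _ ≤ ψ i := partial_sum_le hG hA hψ _ i
  have htsum_le : (∑' t : ℕ, ENNReal.ofReal (((mhQ G A ^ t) *ᵥ indA A) i)) ≤
      ENNReal.ofReal (ψ i) := by
    rw [ENNReal.tsum_eq_iSup_sum]
    exact iSup_le hfin
  rw [hrw]
  calc (∑' t : ℕ, ENNReal.ofReal (((mhQ G A ^ t) *ᵥ indA A) i))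
      ≤ ENNReal.ofReal (ψ i) := htsum_le
    _ ≤ ENNReal.ofReal ((A.card : ℝ) * (6 * (A.card : ℝ) + 2 * (G.maxDegree : ℝ))) :=
        ENNReal.ofReal_le_ofReal hψibound
    _ < ENNReal.ofReal (((A.card : ℝ) + 1) * (6 * (A.card : ℝ) + 2 * (G.maxDegree : ℝ))) := by
        rw [ENNReal.ofReal_lt_ofReal_iff (by nlinarith)]
        exact mul_lt_mul_of_pos_right (lt_add_one _) hXpos
end

section
/- Let G = (V,E) be a finite simple undirected graph and A ⊆ V. Let (i_0, i_1, …, i_k) be a shortest path in G (i.e., a path whose number of edges k equals the graph distance between i_0 and i_k) such that every vertex i_l of the path belongs to A and every neighbor of every vertex i_l belongs to A. Then Σ_{l=0}^{k} deg(i_l) ≤ 3|A|. -/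
open Finset

/-- Split a walk at index `n`. -/
lemma walk_split {V : Type*} {G : SimpleGraph V} :
    ∀ {u v : V} (w : G.Walk u v) (n : ℕ), n ≤ w.length →
      ∃ (p : G.Walk u (w.getVert n)) (q : G.Walk (w.getVert n) v),
        p.length = n ∧ q.length = w.length - n := by
  intro u v w
  induction w with
  | nil =>
    intro n hn
    simp only [SimpleGraph.Walk.length_nil, Nat.le_zero] at hn
    subst hn
    exact ⟨SimpleGraph.Walk.nil, SimpleGraph.Walk.nil, rfl, rfl⟩
  | @cons a b c h p ih =>
    intro n hn
    cases n with
    | zero =>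
      exact ⟨SimpleGraph.Walk.nil, (p.cons h).copy (p.cons h).getVert_zero.symm rfl, rfl, by simp⟩
    | succ m =>
      obtain ⟨q1, q2, hq1, hq2⟩ := ih m (by simpa using hn)
      refine ⟨(q1.cons h).copy rfl (SimpleGraph.Walk.getVert_cons_succ p h).symm,
        q2.copy (SimpleGraph.Walk.getVert_cons_succ p h).symm rfl, by simp [hq1], by simp [hq2]⟩

lemma sum_map_support {V : Type*} {G : SimpleGraph V} (f : V → ℕ) :
    ∀ {u v : V} (w : G.Walk u v),
      (w.support.map f).sum = ∑ l ∈ Finset.range (w.length + 1), f (w.getVert l) := by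
  intro u v w
  induction w with
  | nil => simp
  | @cons a b c h p ih =>
    rw [SimpleGraph.Walk.support_cons, List.map_cons, List.sum_cons, ih,
      SimpleGraph.Walk.length_cons, Finset.sum_range_succ' _ (p.length + 1)]
    simp only [SimpleGraph.Walk.getVert_cons_succ, SimpleGraph.Walk.getVert_zero]
    ring

/-- If `(i_0,…,i_k)` is a shortest path in `G` all of whose vertices lie in `A` and all of
whose vertices' neighbors lie in `A`, then the sum of the degrees of its vertices is at
most `3 |A|`. -/
theorem shortest_path_degree_sum {V : Type*} [Fintype V] [DecidableEq V]
    (G : SimpleGraph V) [DecidableRel G.Adj] (A : Finset V) (u v : V)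
    (w : G.Walk u v) (hshort : w.length = G.dist u v)
    (hA : ∀ x ∈ w.support, x ∈ A)
    (hN : ∀ x ∈ w.support, ∀ y ∈ G.neighborFinset x, y ∈ A) :
    (w.support.map fun x => G.degree x).sum ≤ 3 * A.card := by
  classical
  set k := w.length with hk
  -- degree of each support vertex counted inside A
  have hmem : ∀ l ≤ k, w.getVert l ∈ w.support := fun l hl =>
    SimpleGraph.Walk.mem_support_iff_exists_getVert.mpr ⟨l, rfl, hl⟩
  have hdeg : ∀ l ≤ k, G.degree (w.getVert l)
      = (A.filter (fun y => G.Adj (w.getVert l) y)).card := by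
    intro l hl
    rw [← SimpleGraph.card_neighborFinset_eq_degree]
    congr 1
    ext y
    simp only [Finset.mem_filter, SimpleGraph.mem_neighborFinset]
    exact ⟨fun hy => ⟨hN _ (hmem l hl) y (by simpa using hy), hy⟩, fun hy => hy.2⟩
  rw [sum_map_support]
  have : ∑ l ∈ Finset.range (k + 1), G.degree (w.getVert l)
      = ∑ y ∈ A, ((Finset.range (k + 1)).filter (fun l => G.Adj (w.getVert l) y)).card := by
    simp only [Finset.card_filter]
    rw [Finset.sum_comm]
    refine Finset.sum_congr rfl fun l hl => ?_
    rw [hdeg l (by simpa using Nat.lt_succ_iff.mp (Finset.mem_range.mp hl)), Finset.card_filter]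
  rw [this]
  have hbound : ∀ y ∈ A,
      ((Finset.range (k + 1)).filter (fun l => G.Adj (w.getVert l) y)).card ≤ 3 := by
    intro y _
    set S := (Finset.range (k + 1)).filter (fun l => G.Adj (w.getVert l) y) with hS
    rcases S.eq_empty_or_nonempty with h | h
    · simp [h]
    · have hm := S.min'_mem h
      set m := S.min' h with hmdef
      have hsub : S ⊆ Finset.Icc m (m + 2) := by
        intro l hl
        have hml : m ≤ l := S.min'_le l hl
        have hlk : l ≤ k := by
          have := Finset.mem_range.mp (Finset.mem_filter.mp hl).1
          omega
        have hmk : m ≤ k := le_trans hml hlk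
        have hadjm : G.Adj (w.getVert m) y := (Finset.mem_filter.mp hm).2
        have hadjl : G.Adj (w.getVert l) y := (Finset.mem_filter.mp hl).2
        -- build walk u → v of length m + 2 + (k - l)
        obtain ⟨p1, _, hp1, _⟩ := walk_split w m hmk
        obtain ⟨_, q2, _, hq2⟩ := walk_split w l hlk
        have hwalk := SimpleGraph.dist_le
          (p1.append ((q2.cons hadjl.symm).cons hadjm))
        simp only [SimpleGraph.Walk.length_append, SimpleGraph.Walk.length_cons,
          hp1, hq2, ← hshort] at hwalk
        simp only [Finset.mem_Icc]
        omega
      calc S.card ≤ (Finset.Icc m (m + 2)).card := Finset.card_le_card hsub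
        _ = 3 := by rw [Nat.card_Icc]; omega
  calc ∑ y ∈ A, ((Finset.range (k + 1)).filter (fun l => G.Adj (w.getVert l) y)).card
      ≤ ∑ y ∈ A, 3 := Finset.sum_le_sum hbound
    _ = 3 * A.card := by rw [Finset.sum_const, smul_eq_mul, mul_comm]
end
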